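/- Let M be an a×b real matrix, u ∈ ℝ^a, v ∈ ℝ^b (viewed as a column appended to M and a row appended below M, respectively), and let x, x′ ∈ ℝ. Form the two bordered (a+1)×(b+1) matrices C = [[M, u], [v, x]] and C′ = [[M, u], [v, x′]]. If rank(C) ≤ rank(M) and rank(C′) ≤ rank(M), then x = x′. -/

import Mathlib

open Matrix


/-- The bordered (a+1)×(b+1) matrix `[[M, u], [v, x]]`: top-left block `M`,
last column (above the corner) `u`, last row (left of the corner) `v`,
bottom-right corner `x`. -/
def bordered {a b : ℕ} (M : Matrix (Fin a) (Fin b) ℝ) (u : Fin a → ℝ)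
    (v : Fin b → ℝ) (x : ℝ) : Matrix (Fin (a + 1)) (Fin (b + 1)) ℝ :=
  Matrix.of fun i j =>
    if hi : i.val < a then
      if hj : j.val < b then M ⟨i.val, hi⟩ ⟨j.val, hj⟩ else u ⟨i.val, hi⟩
    else
      if hj : j.val < b then v ⟨j.val, hj⟩ else x

/-- The top block `[M, u]` of the bordered matrix. -/
def topBlock {a b : ℕ} (M : Matrix (Fin a) (Fin b) ℝ) (u : Fin a → ℝ) :
    Matrix (Fin a) (Fin (b + 1)) ℝ :=
  Matrix.of fun i j => if hj : j.val < b then M i ⟨j.val, hj⟩ else u i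

lemma topBlock_row_eq {a b : ℕ} (M : Matrix (Fin a) (Fin b) ℝ) (u : Fin a → ℝ)
    (v : Fin b → ℝ) (x : ℝ) (i : Fin a) :
    topBlock M u i = bordered M u v x i.castSucc := by
  funext j
  simp only [topBlock, bordered, Matrix.of_apply, Fin.coe_castSucc]
  rw [dif_pos i.isLt]

lemma col_eq {a b : ℕ} (M : Matrix (Fin a) (Fin b) ℝ) (u : Fin a → ℝ) (j : Fin b) :
    Mᵀ j = (topBlock M u)ᵀ j.castSucc := by
  funext i
  simp only [Matrix.transpose_apply, topBlock, Matrix.of_apply, Fin.coe_castSucc]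
  rw [dif_pos j.isLt]

/-- Key extraction lemma. -/
lemma bordered_combos {a b : ℕ} (M : Matrix (Fin a) (Fin b) ℝ) (u : Fin a → ℝ)
    (v : Fin b → ℝ) (x : ℝ) (h : (bordered M u v x).rank ≤ M.rank) :
    (∃ c : Fin a → ℝ, (∀ j, ∑ i, c i * M i j = v j) ∧ ∑ i, c i * u i = x) ∧
    (∃ w : Fin b → ℝ, ∀ i, ∑ j, w j * M i j = u i) := by
  classical
  set C := bordered M u v x with hC
  set T := topBlock M u with hT
  -- rank M ≤ rank T via column spans
  have hcolsub : Submodule.span ℝ (Set.range Mᵀ) ≤ Submodule.span ℝ (Set.range Tᵀ) := by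
    apply Submodule.span_mono
    rintro _ ⟨j, rfl⟩
    exact ⟨j.castSucc, (col_eq M u j).symm⟩
  have r1 : M.rank ≤ T.rank := by
    rw [Matrix.rank_eq_finrank_span_cols, Matrix.rank_eq_finrank_span_cols]
    exact Submodule.finrank_mono hcolsub
  -- rank T ≤ rank C via row spans
  have hrowsub : Submodule.span ℝ (Set.range T) ≤ Submodule.span ℝ (Set.range C) := by
    apply Submodule.span_mono
    rintro _ ⟨i, rfl⟩
    exact ⟨i.castSucc, (topBlock_row_eq M u v x i).symm⟩
  have r2 : T.rank ≤ C.rank := by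
    rw [Matrix.rank_eq_finrank_span_row, Matrix.rank_eq_finrank_span_row]
    exact Submodule.finrank_mono hrowsub
  -- equalities of spans
  have hrankT : T.rank = M.rank := le_antisymm (r2.trans h) r1
  have hrowspan : Submodule.span ℝ (Set.range T) = Submodule.span ℝ (Set.range C) := by
    apply Submodule.eq_of_le_of_finrank_le hrowsub
    have := h.trans r1
    rw [Matrix.rank_eq_finrank_span_row, Matrix.rank_eq_finrank_span_row] at this
    exact this
  have hcolspan : Submodule.span ℝ (Set.range Mᵀ) = Submodule.span ℝ (Set.range Tᵀ) := by
    apply Submodule.eq_of_le_of_finrank_le hcolsub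
    have := hrankT.le
    rw [Matrix.rank_eq_finrank_span_cols, Matrix.rank_eq_finrank_span_cols] at this
    exact this
  constructor
  · -- last row of C lies in span of rows of T
    have hmem : C (Fin.last a) ∈ Submodule.span ℝ (Set.range T) := by
      rw [hrowspan]
      exact Submodule.subset_span (Set.mem_range_self _)
    obtain ⟨c, hc⟩ := (Submodule.mem_span_range_iff_exists_fun ℝ).mp hmem
    refine ⟨c, ?_, ?_⟩
    · intro j
      have := congrFun hc j.castSucc
      simp only [Finset.sum_apply, Pi.smul_apply, smul_eq_mul] at this
      have hTij : ∀ i, T i j.castSucc = M i j := fun i => by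
        simp only [hT, topBlock, Matrix.of_apply, Fin.coe_castSucc]
        rw [dif_pos j.isLt]
      have hCv : C (Fin.last a) j.castSucc = v j := by
        simp only [hC, bordered, Matrix.of_apply, Fin.val_last, Fin.coe_castSucc]
        rw [dif_neg (lt_irrefl a), dif_pos j.isLt]
      rw [← hCv, ← this]
      exact Finset.sum_congr rfl fun i _ => by rw [hTij]
    · have := congrFun hc (Fin.last b)
      simp only [Finset.sum_apply, Pi.smul_apply, smul_eq_mul] at this
      have hTiu : ∀ i, T i (Fin.last b) = u i := fun i => by
        simp only [hT, topBlock, Matrix.of_apply, Fin.val_last]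
        rw [dif_neg (lt_irrefl b)]
      have hCx : C (Fin.last a) (Fin.last b) = x := by
        simp only [hC, bordered, Matrix.of_apply, Fin.val_last]
        rw [dif_neg (lt_irrefl a), dif_neg (lt_irrefl b)]
      rw [← hCx, ← this]
      exact Finset.sum_congr rfl fun i _ => by rw [hTiu]
  · -- last column of T lies in span of columns of M
    have hmem : Tᵀ (Fin.last b) ∈ Submodule.span ℝ (Set.range Mᵀ) := by
      rw [hcolspan]
      exact Submodule.subset_span (Set.mem_range_self _)
    obtain ⟨w, hw⟩ := (Submodule.mem_span_range_iff_exists_fun ℝ).mp hmem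
    refine ⟨w, fun i => ?_⟩
    have := congrFun hw i
    simp only [Finset.sum_apply, Pi.smul_apply, smul_eq_mul, Matrix.transpose_apply] at this
    have hTu : T i (Fin.last b) = u i := by
      simp only [hT, topBlock, Matrix.of_apply, Fin.val_last]
      rw [dif_neg (lt_irrefl b)]
    rw [← hTu, ← this]

/-- Uniqueness of the corner entry: if two bordered matrices built from the same
`M`, `u`, `v` both have rank not exceeding that of `M`, their corner entries
coincide. -/
theorem bordered_corner_unique {a b : ℕ} (M : Matrix (Fin a) (Fin b) ℝ)
    (u : Fin a → ℝ) (v : Fin b → ℝ) (x x' : ℝ)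
    (h : (bordered M u v x).rank ≤ M.rank)
    (h' : (bordered M u v x').rank ≤ M.rank) :
    x = x' := by
  obtain ⟨⟨c, hcv, hcx⟩, ⟨w, hw⟩⟩ := bordered_combos M u v x h
  obtain ⟨⟨c', hcv', hcx'⟩, -⟩ := bordered_combos M u v x' h'
  have key : ∀ d : Fin a → ℝ, (∀ j, ∑ i, d i * M i j = v j) →
      ∑ i, d i * u i = ∑ j, w j * v j := by
    intro d hdv
    calc ∑ i, d i * u i = ∑ i, ∑ j, d i * (w j * M i j) := by
          refine Finset.sum_congr rfl fun i _ => ?_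
          rw [← Finset.mul_sum, hw]
      _ = ∑ j, ∑ i, d i * (w j * M i j) := Finset.sum_comm
      _ = ∑ j, w j * ∑ i, d i * M i j := by
          refine Finset.sum_congr rfl fun j _ => ?_
          rw [Finset.mul_sum]
          exact Finset.sum_congr rfl fun i _ => by ring
      _ = ∑ j, w j * v j := by simp_rw [hdv]
  rw [← hcx, ← hcx', key c hcv, key c' hcv']
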